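/- Modulus-of-continuity bound: suppose for processes X_n on [0,1] and events E_n(δ) with limsup_n P(E_n(δ)^c) ≤ Cδ^{3β} (β > 1/3), on E_n(δ) one has sup_{v∈[u,u+δ]} |X_n(v) − X_n(u)| ≤ max_± sup_{v∈[u,u+δ]} |Y_{n,±}(v) − Y_{n,±}(u)| + 4δ^{1−β}, where Y_{n,±} converge weakly to a Brownian motion B(2·). Then for every η > 0, limsup_{δ→0+} (1/δ) · limsup_{n→∞} P( sup_{v∈[u,u+δ]} |X_n(v) − X_n(u)| > η ) = 0. -/

import Mathlib

open Set MeasureTheory Filter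

/-- Subadditivity of `limsup` for `ℝ≥0∞`-valued sequences. -/
lemma my_limsup_add_le {f g : ℕ → ENNReal} :
    Filter.limsup (fun n => f n + g n) Filter.atTop ≤
      Filter.limsup f Filter.atTop + Filter.limsup g Filter.atTop := by
  refine ENNReal.le_of_forall_pos_le_add fun ε hε hb => ?_
  have hfne : Filter.limsup f Filter.atTop ≠ ⊤ := (lt_of_le_of_lt le_self_add hb).ne
  have hgne : Filter.limsup g Filter.atTop ≠ ⊤ := (lt_of_le_of_lt le_add_self hb).ne
  have hε2 : ((ε : ENNReal) / 2) ≠ 0 := by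
    simp [ENNReal.div_eq_zero_iff, hε.ne']
  have e1 : ∀ᶠ n in Filter.atTop, f n < Filter.limsup f Filter.atTop + ε / 2 :=
    Filter.eventually_lt_of_limsup_lt (ENNReal.lt_add_right hfne hε2)
  have e2 : ∀ᶠ n in Filter.atTop, g n < Filter.limsup g Filter.atTop + ε / 2 :=
    Filter.eventually_lt_of_limsup_lt (ENNReal.lt_add_right hgne hε2)
  refine Filter.limsup_le_of_le (by isBoundedDefault) ?_
  filter_upwards [e1, e2] with n h1 h2
  calc f n + g n
      ≤ (Filter.limsup f Filter.atTop + ε / 2) + (Filter.limsup g Filter.atTop + ε / 2) :=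
        add_le_add h1.le h2.le
    _ = Filter.limsup f Filter.atTop + Filter.limsup g Filter.atTop
          + ((ε : ENNReal) / 2 + ε / 2) := by ring
    _ = Filter.limsup f Filter.atTop + Filter.limsup g Filter.atTop + ε := by
        rw [ENNReal.add_halves]

/-- **Modulus-of-continuity bound.** Suppose on events `E_n(δ)` with
`limsup_n P(E_n(δ)ᶜ) ≤ Cδ^{3β}` (`β > 1/3`) the oscillation of `X_n` on `[u,u+δ]` is
bounded by the oscillation of processes `Y_{n,±}` plus `4δ^{1−β}`, where `Y_{n,±}`
converge weakly to the Brownian motion `B(2·)`. Then for every `η > 0`,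
`limsup_{δ→0+} (1/δ)·limsup_n P(sup_{v∈[u,u+δ]} |X_n(v) − X_n(u)| > η) = 0`. -/
theorem oscillation_control
    {Ω Ω' : Type*} [MeasurableSpace Ω] [MeasurableSpace Ω']
    (ℙ : Measure Ω) [IsProbabilityMeasure ℙ] (ℙ' : Measure Ω') [IsProbabilityMeasure ℙ']
    (X Yp Ym : ℕ → ℝ → Ω → ℝ) (B : ℝ → Ω' → ℝ)
    (E : ℕ → ℝ → Set Ω) (C β : ℝ) (hC : 0 < C) (hβ : β ∈ Set.Ioo (1/3 : ℝ) 1)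
    (u : ℝ) (hu : u ∈ Set.Ico (0:ℝ) 1)
    -- probability of the bad events
    (hE : ∀ δ ∈ Set.Ioo (0:ℝ) 1,
      Filter.limsup (fun n => ℙ (E n δ)ᶜ) atTop ≤ ENNReal.ofReal (C * δ ^ (3 * β)))
    -- oscillation bound on the good events
    (hosc : ∀ (n : ℕ), ∀ δ ∈ Set.Ioo (0:ℝ) 1, ∀ ω ∈ E n δ,
      (⨆ v : Set.Icc u (u + δ), |X n (↑v) ω - X n u ω|)
        ≤ max (⨆ v : Set.Icc u (u + δ), |Yp n (↑v) ω - Yp n u ω|)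
              (⨆ v : Set.Icc u (u + δ), |Ym n (↑v) ω - Ym n u ω|) + 4 * δ ^ (1 - β))
    -- weak convergence of `Y_{n,±}` to `B(2·)`: convergence of sup-increment tails
    (hYp : ∀ δ ∈ Set.Ioo (0:ℝ) 1, ∀ s : ℝ, 0 < s →
      Filter.limsup (fun n =>
          ℙ {ω | s < ⨆ v : Set.Icc u (u + δ), |Yp n (↑v) ω - Yp n u ω|}) atTop
        ≤ ℙ' {ω' | s ≤ ⨆ v : Set.Icc u (u + δ), |B (2 * ↑v) ω' - B (2 * u) ω'|})
    (hYm : ∀ δ ∈ Set.Ioo (0:ℝ) 1, ∀ s : ℝ, 0 < s →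
      Filter.limsup (fun n =>
          ℙ {ω | s < ⨆ v : Set.Icc u (u + δ), |Ym n (↑v) ω - Ym n u ω|}) atTop
        ≤ ℙ' {ω' | s ≤ ⨆ v : Set.Icc u (u + δ), |B (2 * ↑v) ω' - B (2 * u) ω'|})
    -- Brownian scaling for the sup of increments
    (hBscale : ∀ δ ∈ Set.Ioo (0:ℝ) 1, ∀ M : ℝ, 0 < M →
      ℙ' {ω' | M ≤ ⨆ v : Set.Icc u (u + δ), |B (2 * ↑v) ω' - B (2 * u) ω'|}
        ≤ ℙ' {ω' | M / Real.sqrt (2 * δ) ≤ ⨆ v : Set.Icc (0:ℝ) 1, |B (↑v) ω'|})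
    -- Gaussian tail bound for the running supremum of `B`
    (hBtail : ∀ M : ℝ, 0 < M →
      ℙ' {ω' | M ≤ ⨆ v : Set.Icc (0:ℝ) 1, |B (↑v) ω'|}
        ≤ ENNReal.ofReal (4 * Real.exp (-(M ^ 2) / 2))) :
    ∀ η : ℝ, 0 < η →
      Filter.limsup (fun δ : ℝ =>
        ENNReal.ofReal (1 / δ) *
          Filter.limsup (fun n =>
            ℙ {ω | η < ⨆ v : Set.Icc u (u + δ), |X n (↑v) ω - X n u ω|}) atTop)
        (nhdsWithin 0 (Set.Ioi 0)) = 0 := by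
  intro η hη
  obtain ⟨hβ1, hβ2⟩ := hβ
  have hβ3 : 1 < 3 * β := by linarith
  set F : ℝ → ENNReal := fun δ =>
    ENNReal.ofReal (C * δ ^ (3 * β - 1) + (8 / δ) * Real.exp (-(η ^ 2 / (16 * δ)))) with hFdef
  -- the dominating function tends to 0 as δ → 0⁺
  have hFt : Tendsto F (nhdsWithin 0 (Set.Ioi 0)) (nhds 0) := by
    have hc : (0:ℝ) < η ^ 2 / 16 := by positivity
    have h1 : Tendsto (fun δ : ℝ => C * δ ^ (3 * β - 1))
        (nhdsWithin 0 (Set.Ioi 0)) (nhds 0) := by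
      have hct : Tendsto (fun δ : ℝ => δ ^ (3 * β - 1)) (nhds 0)
          (nhds ((0:ℝ) ^ (3 * β - 1))) :=
        (Real.continuousAt_rpow_const 0 (3 * β - 1) (Or.inr (by linarith))).tendsto
      rw [Real.zero_rpow (by linarith)] at hct
      have h' : Tendsto (fun δ : ℝ => C * δ ^ (3 * β - 1))
          (nhdsWithin 0 (Set.Ioi 0)) (nhds (C * 0)) :=
        (hct.const_mul C).mono_left nhdsWithin_le_nhds
      simpa using h'
    have hx : Tendsto (fun x : ℝ => x * Real.exp (-x)) atTop (nhds 0) := by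
      simpa using Real.tendsto_pow_mul_exp_neg_atTop_nhds_zero 1
    have hlin : Tendsto (fun t : ℝ => η ^ 2 / 16 * t) atTop atTop :=
      Tendsto.const_mul_atTop hc tendsto_id
    have h2' : Tendsto (fun t : ℝ => (η ^ 2 / 16 * t) * Real.exp (-(η ^ 2 / 16 * t)))
        atTop (nhds 0) := hx.comp hlin
    have h3 : Tendsto (fun t : ℝ => 8 * t * Real.exp (-(η ^ 2 / 16 * t))) atTop (nhds 0) := by
      have h'' := h2'.const_mul (8 * (η ^ 2 / 16)⁻¹)
      rw [mul_zero] at h''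
      refine h''.congr fun t => ?_
      field_simp
    have h2 : Tendsto (fun δ : ℝ => (8 / δ) * Real.exp (-(η ^ 2 / (16 * δ))))
        (nhdsWithin 0 (Set.Ioi 0)) (nhds 0) := by
      have hcomp := h3.comp tendsto_inv_nhdsGT_zero
      refine hcomp.congr' ?_
      filter_upwards [self_mem_nhdsWithin] with δ (hδ : (0:ℝ) < δ)
      show 8 * δ⁻¹ * Real.exp (-(η ^ 2 / 16 * δ⁻¹)) = 8 / δ * Real.exp (-(η ^ 2 / (16 * δ)))
      rw [div_eq_mul_inv]
      congr 2
      field_simp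
    have hreal := h1.add h2
    rw [add_zero] at hreal
    have := (ENNReal.continuous_ofReal.tendsto 0).comp hreal
    rw [ENNReal.ofReal_zero] at this
    exact this
  -- eventual domination
  have hev : ∀ᶠ δ in nhdsWithin (0:ℝ) (Set.Ioi 0),
      ENNReal.ofReal (1 / δ) *
        Filter.limsup (fun n =>
          ℙ {ω | η < ⨆ v : Set.Icc u (u + δ), |X n (↑v) ω - X n u ω|}) atTop ≤ F δ := by
    have hsm : Tendsto (fun δ : ℝ => 4 * δ ^ (1 - β)) (nhdsWithin 0 (Set.Ioi 0)) (nhds 0) := by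
      have hct : Tendsto (fun δ : ℝ => δ ^ (1 - β)) (nhds 0) (nhds ((0:ℝ) ^ (1 - β))) :=
        (Real.continuousAt_rpow_const 0 (1 - β) (Or.inr (by linarith))).tendsto
      rw [Real.zero_rpow (by linarith)] at hct
      have h' : Tendsto (fun δ : ℝ => 4 * δ ^ (1 - β))
          (nhdsWithin 0 (Set.Ioi 0)) (nhds (4 * 0)) :=
        (hct.const_mul 4).mono_left nhdsWithin_le_nhds
      simpa using h'
    have hsmall : ∀ᶠ δ in nhdsWithin (0:ℝ) (Set.Ioi 0), 4 * δ ^ (1 - β) ≤ η / 2 :=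
      (hsm.eventually_lt_const (half_pos hη)).mono fun _ h => h.le
    have hlt1 : ∀ᶠ δ in nhdsWithin (0:ℝ) (Set.Ioi 0), δ < 1 :=
      Filter.eventually_of_mem (nhdsWithin_le_nhds (Iio_mem_nhds (by norm_num))) fun x hx => hx
    filter_upwards [hsmall, hlt1, self_mem_nhdsWithin] with δ hδ4 hδ1 hδ0
    replace hδ0 : (0:ℝ) < δ := hδ0
    have hδ : δ ∈ Set.Ioo (0:ℝ) 1 := ⟨hδ0, hδ1⟩
    have hδne : δ ≠ 0 := ne_of_gt hδ0
    have hM : 0 < η / 2 / Real.sqrt (2 * δ) :=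
      div_pos (half_pos hη) (Real.sqrt_pos.mpr (by linarith))
    -- pointwise measure inequality
    have hstep : ∀ n, ℙ {ω | η < ⨆ v : Set.Icc u (u + δ), |X n (↑v) ω - X n u ω|}
        ≤ ℙ (E n δ)ᶜ +
          (ℙ {ω | η / 2 < ⨆ v : Set.Icc u (u + δ), |Yp n (↑v) ω - Yp n u ω|} +
           ℙ {ω | η / 2 < ⨆ v : Set.Icc u (u + δ), |Ym n (↑v) ω - Ym n u ω|}) := by
      intro n
      have hsub : {ω | η < ⨆ v : Set.Icc u (u + δ), |X n (↑v) ω - X n u ω|}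
          ⊆ (E n δ)ᶜ ∪
            ({ω | η / 2 < ⨆ v : Set.Icc u (u + δ), |Yp n (↑v) ω - Yp n u ω|} ∪
             {ω | η / 2 < ⨆ v : Set.Icc u (u + δ), |Ym n (↑v) ω - Ym n u ω|}) := by
        intro ω hω
        by_cases hωE : ω ∈ E n δ
        · have hb := hosc n δ hδ ω hωE
          have hx : η < max (⨆ v : Set.Icc u (u + δ), |Yp n (↑v) ω - Yp n u ω|)
              (⨆ v : Set.Icc u (u + δ), |Ym n (↑v) ω - Ym n u ω|) + 4 * δ ^ (1 - β) :=
            lt_of_lt_of_le hω hb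
          have hmax : η / 2 < max (⨆ v : Set.Icc u (u + δ), |Yp n (↑v) ω - Yp n u ω|)
              (⨆ v : Set.Icc u (u + δ), |Ym n (↑v) ω - Ym n u ω|) := by linarith
          rcases lt_max_iff.mp hmax with h | h
          · exact Or.inr (Or.inl h)
          · exact Or.inr (Or.inr h)
        · exact Or.inl hωE
      calc ℙ {ω | η < ⨆ v : Set.Icc u (u + δ), |X n (↑v) ω - X n u ω|}
          ≤ ℙ ((E n δ)ᶜ ∪
              ({ω | η / 2 < ⨆ v : Set.Icc u (u + δ), |Yp n (↑v) ω - Yp n u ω|} ∪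
               {ω | η / 2 < ⨆ v : Set.Icc u (u + δ), |Ym n (↑v) ω - Ym n u ω|})) :=
            measure_mono hsub
        _ ≤ ℙ (E n δ)ᶜ +
            ℙ ({ω | η / 2 < ⨆ v : Set.Icc u (u + δ), |Yp n (↑v) ω - Yp n u ω|} ∪
               {ω | η / 2 < ⨆ v : Set.Icc u (u + δ), |Ym n (↑v) ω - Ym n u ω|}) :=
            measure_union_le _ _
        _ ≤ _ := add_le_add_right (measure_union_le _ _) _
    -- limsup bound
    have t2 := (hYp δ hδ (η / 2) (half_pos hη)).trans
      ((hBscale δ hδ (η / 2) (half_pos hη)).trans (hBtail (η / 2 / Real.sqrt (2 * δ)) hM))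
    have t3 := (hYm δ hδ (η / 2) (half_pos hη)).trans
      ((hBscale δ hδ (η / 2) (half_pos hη)).trans (hBtail (η / 2 / Real.sqrt (2 * δ)) hM))
    have hlim : Filter.limsup (fun n =>
          ℙ {ω | η < ⨆ v : Set.Icc u (u + δ), |X n (↑v) ω - X n u ω|}) atTop
        ≤ ENNReal.ofReal (C * δ ^ (3 * β)) +
          (ENNReal.ofReal (4 * Real.exp (-((η / 2 / Real.sqrt (2 * δ)) ^ 2) / 2)) +
           ENNReal.ofReal (4 * Real.exp (-((η / 2 / Real.sqrt (2 * δ)) ^ 2) / 2))) := by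
      calc Filter.limsup (fun n =>
            ℙ {ω | η < ⨆ v : Set.Icc u (u + δ), |X n (↑v) ω - X n u ω|}) atTop
          ≤ Filter.limsup (fun n => ℙ (E n δ)ᶜ +
              (ℙ {ω | η / 2 < ⨆ v : Set.Icc u (u + δ), |Yp n (↑v) ω - Yp n u ω|} +
               ℙ {ω | η / 2 < ⨆ v : Set.Icc u (u + δ), |Ym n (↑v) ω - Ym n u ω|})) atTop :=
            Filter.limsup_le_limsup (Filter.Eventually.of_forall hstep)
        _ ≤ Filter.limsup (fun n => ℙ (E n δ)ᶜ) atTop +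
            Filter.limsup (fun n =>
              ℙ {ω | η / 2 < ⨆ v : Set.Icc u (u + δ), |Yp n (↑v) ω - Yp n u ω|} +
              ℙ {ω | η / 2 < ⨆ v : Set.Icc u (u + δ), |Ym n (↑v) ω - Ym n u ω|}) atTop :=
            my_limsup_add_le
        _ ≤ Filter.limsup (fun n => ℙ (E n δ)ᶜ) atTop +
            (Filter.limsup (fun n =>
               ℙ {ω | η / 2 < ⨆ v : Set.Icc u (u + δ), |Yp n (↑v) ω - Yp n u ω|}) atTop +
             Filter.limsup (fun n =>
               ℙ {ω | η / 2 < ⨆ v : Set.Icc u (u + δ), |Ym n (↑v) ω - Ym n u ω|}) atTop) :=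
            add_le_add_right my_limsup_add_le _
        _ ≤ _ := add_le_add (hE δ hδ) (add_le_add t2 t3)
    -- multiply by 1/δ
    refine (mul_le_mul_right hlim (ENNReal.ofReal (1 / δ))).trans_eq ?_
    rw [← ENNReal.ofReal_add (by positivity) (by positivity),
        ← ENNReal.ofReal_add (by positivity) (by positivity),
        ← ENNReal.ofReal_mul (by positivity)]
    simp only [hFdef]
    congr 1
    have hs : Real.sqrt (2 * δ) ^ 2 = 2 * δ := Real.sq_sqrt (by linarith)
    have hM2 : (η / 2 / Real.sqrt (2 * δ)) ^ 2 = η ^ 2 / (8 * δ) := by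
      rw [div_pow, hs]
      field_simp
      ring
    rw [hM2]
    have h16 : -(η ^ 2 / (8 * δ)) / 2 = -(η ^ 2 / (16 * δ)) := by
      field_simp
      ring
    rw [h16]
    have hrp : δ ^ (3 * β - 1) = δ ^ (3 * β) / δ := by
      rw [Real.rpow_sub hδ0, Real.rpow_one]
    rw [hrp]
    field_simp
    ring
  -- conclude
  have hle := Filter.limsup_le_limsup hev
  rw [hFt.limsup_eq] at hle
  exact nonpos_iff_eq_zero.mp hle
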